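/- Exchange argument for optimal goal-safe-interval sequences: in the timed model on an undirected graph with finite constraints, any optimal (minimum completion time) constraint-respecting path π from (0, s) visiting each goal vertex in a finite set Γ at least once induces a sequence of goal safe intervals I_1, ..., I_n (the safe intervals containing the times at which π first covers each goal), and the path produced by, for this sequence, greedily taking shortest subpaths arriving as early as possible within each successive I_k, has completion time equal to that of π. Hence the minimum over all goal-safe-interval visiting sequences of the greedy concatenated path's completion time equals the true optimum. -/

import Mathlib

structure TPath {V : Type*} (G : SimpleGraph V) where
  start : ℕ
  len : ℕ
  pos : ℕ → V
  step : ∀ i, i < len → pos (i + 1) = pos i ∨ G.Adj (pos i) (pos (i + 1))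

namespace TPath

variable {V : Type*} {G : SimpleGraph V}

def Respects (p : TPath G) (C : Set (ℕ × V)) : Prop :=
  ∀ i, i ≤ p.len → (p.start + i, p.pos i) ∉ C

def Visits (p : TPath G) (g : V) : Prop :=
  ∃ i, i ≤ p.len ∧ p.pos i = g

def completion (p : TPath G) : ℕ := p.start + p.len

end TPath

/-- A (goal) time interval at a vertex; `hi = ⊤` means unbounded above. -/
structure SInterval (V : Type*) where
  v : V
  lo : ℕ
  hi : ℕ∞

/-- `I` is a safe interval: maximal constraint-free time interval at `I.v`. -/
def SInterval.IsSafe {V : Type*} (I : SInterval V) (C : Set (ℕ × V)) : Prop :=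
  (∀ t : ℕ, I.lo ≤ t → (t : ℕ∞) ≤ I.hi → (t, I.v) ∉ C) ∧
  (I.lo = 0 ∨ (I.lo - 1, I.v) ∈ C) ∧
  (∀ t : ℕ, (t : ℕ∞) = I.hi + 1 → (t, I.v) ∈ C)

/-- Earliest completion time of a constraint-respecting path from `(t, u)`
ending at `I.v` at a time inside the interval `I`. -/
noncomputable def earliestReach {V : Type*} (G : SimpleGraph V) (C : Set (ℕ × V))
    (t : ℕ) (u : V) (I : SInterval V) : ℕ∞ :=
  sInf {n : ℕ∞ | ∃ p : TPath G, p.start = t ∧ p.pos 0 = u ∧ p.Respects C ∧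
    p.pos p.len = I.v ∧ I.lo ≤ p.completion ∧ (p.completion : ℕ∞) ≤ I.hi ∧
    (p.completion : ℕ∞) = n}

/-- The path visits the safe intervals `I 0, …, I (n-1)` in this order. -/
def VisitsInOrder {V : Type*} {G : SimpleGraph V} (p : TPath G) {n : ℕ}
    (I : Fin n → SInterval V) : Prop :=
  ∃ idx : Fin n → ℕ, Monotone idx ∧ ∀ k, idx k ≤ p.len ∧ p.pos (idx k) = (I k).v ∧
    (I k).lo ≤ p.start + idx k ∧ ((p.start + idx k : ℕ) : ℕ∞) ≤ (I k).hi

/-- Minimum completion time over constraint-respecting paths from `(t, s)`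
visiting every goal of `Γ` at least once (`⊤` if none exists). -/
noncomputable def minCompletion {V : Type*} (G : SimpleGraph V) (C : Set (ℕ × V))
    (t : ℕ) (s : V) (Γ : Set V) : ℕ∞ :=
  sInf {n : ℕ∞ | ∃ p : TPath G, p.start = t ∧ p.pos 0 = s ∧ p.Respects C ∧
    (∀ g ∈ Γ, p.Visits g) ∧ (p.completion : ℕ∞) = n}


section Aux
variable {V : Type*} {G : SimpleGraph V}

/-- Concatenation of two timed paths whose endpoints agree. -/
def tconcat (p q : TPath G) (hc : q.pos 0 = p.pos p.len) : TPath G where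
  start := p.start
  len := p.len + q.len
  pos := fun i => if i < p.len then p.pos i else q.pos (i - p.len)
  step := by
    intro i hi
    by_cases h : i < p.len
    · have h1 : (if i + 1 < p.len then p.pos (i+1) else q.pos (i + 1 - p.len)) = p.pos (i+1) := by
        by_cases h2 : i + 1 < p.len
        · simp [h2]
        · have he : i + 1 = p.len := by omega
          simp only [if_neg h2, he, Nat.sub_self, hc]
          simp
      simp only [h1, if_pos h]
      exact p.step i h
    · have h3 : ¬ (i + 1 < p.len) := by omega
      simp only [if_neg h, if_neg h3]
      have he : i + 1 - p.len = (i - p.len) + 1 := by omega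
      rw [he]
      exact q.step (i - p.len) (by omega)

theorem tconcat_start (p q : TPath G) (hc) : (tconcat p q hc).start = p.start := rfl
theorem tconcat_len (p q : TPath G) (hc) : (tconcat p q hc).len = p.len + q.len := rfl

theorem tconcat_pos_left (p q : TPath G) (hc) (i : ℕ) (hi : i ≤ p.len) :
    (tconcat p q hc).pos i = p.pos i := by
  by_cases h : i < p.len
  · simp [tconcat, h]
  · have he : i = p.len := by omega
    simp [tconcat, h, he, hc]

theorem tconcat_pos_right (p q : TPath G) (hc) (j : ℕ) :
    (tconcat p q hc).pos (p.len + j) = q.pos j := by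
  simp [tconcat, Nat.add_sub_cancel_left]

theorem tconcat_respects {C : Set (ℕ × V)} (p q : TPath G) (hc)
    (hst : q.start = p.start + p.len) (hp : p.Respects C) (hq : q.Respects C) :
    (tconcat p q hc).Respects C := by
  intro i hi
  by_cases h : i < p.len
  · rw [tconcat_pos_left p q hc i (le_of_lt h)]
    exact hp i (le_of_lt h)
  · have h2 : (tconcat p q hc).pos i = q.pos (i - p.len) := by simp [tconcat, h]
    rw [h2, tconcat_start]
    have h3 : p.start + i = q.start + (i - p.len) := by omega
    rw [h3]
    exact hq (i - p.len) (by simp only [tconcat_len] at hi; omega)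

theorem tconcat_visits_left {g : V} (p q : TPath G) (hc) (h : p.Visits g) :
    (tconcat p q hc).Visits g := by
  obtain ⟨i, hi, he⟩ := h
  exact ⟨i, by simp only [tconcat_len]; omega, by rw [tconcat_pos_left p q hc i hi]; exact he⟩

theorem tconcat_visits_right {g : V} (p q : TPath G) (hc) (h : q.Visits g) :
    (tconcat p q hc).Visits g := by
  obtain ⟨i, hi, he⟩ := h
  exact ⟨p.len + i, by simp only [tconcat_len]; omega, by rw [tconcat_pos_right]; exact he⟩

theorem tconcat_end (p q : TPath G) (hc) :
    (tconcat p q hc).pos (tconcat p q hc).len = q.pos q.len := by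
  rw [tconcat_len, tconcat_pos_right]

/-- A path that waits in place. -/
def waitPath (G : SimpleGraph V) (t : ℕ) (v : V) (d : ℕ) : TPath G :=
  ⟨t, d, fun _ => v, fun _ _ => Or.inl rfl⟩

/-- The subpath of `p` between indices `a` and `b`. -/
def subPath (p : TPath G) (a b : ℕ) (hb : b ≤ p.len) : TPath G where
  start := p.start + a
  len := b - a
  pos := fun i => p.pos (a + i)
  step := by
    intro i hi
    have he : a + (i + 1) = (a + i) + 1 := by omega
    simpa [he] using p.step (a + i) (by omega)

end Aux

section SafeInt
variable {V : Type*}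

open Classical in
/-- The maximal constraint-free interval at `v` around time `t₀`. -/
noncomputable def mkSafe (C : Set (ℕ × V)) (v : V) (t₀ : ℕ) : SInterval V where
  v := v
  lo := sInf {t | ∀ u, t ≤ u → u ≤ t₀ → (u, v) ∉ C}
  hi := if ∃ u, t₀ < u ∧ (u, v) ∈ C then
          (((sInf {u | t₀ < u ∧ (u, v) ∈ C}) - 1 : ℕ) : ℕ∞) else ⊤

theorem mkSafe_v (C : Set (ℕ × V)) (v : V) (t₀ : ℕ) : (mkSafe C v t₀).v = v := rfl

theorem mkSafe_spec (C : Set (ℕ × V)) (v : V) (t₀ : ℕ) (h0 : (t₀, v) ∉ C) :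
    (mkSafe C v t₀).IsSafe C ∧ (mkSafe C v t₀).lo ≤ t₀ ∧ ((t₀ : ℕ∞)) ≤ (mkSafe C v t₀).hi := by
  classical
  set L : Set ℕ := {t | ∀ u, t ≤ u → u ≤ t₀ → (u, v) ∉ C} with hL
  have ht₀L : t₀ ∈ L := by
    intro u h1 h2
    have : u = t₀ := le_antisymm h2 h1
    rw [this]; exact h0
  have hlo_le : (mkSafe C v t₀).lo ≤ t₀ := Nat.sInf_le ht₀L
  have hlo_mem : (mkSafe C v t₀).lo ∈ L := Nat.sInf_mem ⟨t₀, ht₀L⟩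
  have hfree : ∀ u, (mkSafe C v t₀).lo ≤ u → u ≤ t₀ → (u, v) ∉ C := hlo_mem
  have hbdry : (mkSafe C v t₀).lo = 0 ∨ ((mkSafe C v t₀).lo - 1, v) ∈ C := by
    rcases Nat.eq_zero_or_pos (mkSafe C v t₀).lo with h | h
    · exact Or.inl h
    · right
      have hlodef : (mkSafe C v t₀).lo = sInf L := rfl
      have hnm : (mkSafe C v t₀).lo - 1 ∉ L :=
        Nat.notMem_of_lt_sInf (by rw [← hlodef]; omega)
      rw [hL] at hnm
      simp only [Set.mem_setOf_eq] at hnm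
      push_neg at hnm
      obtain ⟨u, hu1, hu2, hu3⟩ := hnm
      have : u = (mkSafe C v t₀).lo - 1 := by
        by_contra hne
        have hge : (mkSafe C v t₀).lo ≤ u := by omega
        exact (hfree u hge hu2) hu3
      rw [← this]; exact hu3
  by_cases hH : ∃ u, t₀ < u ∧ (u, v) ∈ C
  · set m := sInf {u | t₀ < u ∧ (u, v) ∈ C} with hm
    have hmm : t₀ < m ∧ (m, v) ∈ C := Nat.sInf_mem hH
    have hhi : (mkSafe C v t₀).hi = ((m - 1 : ℕ) : ℕ∞) := by
      simp only [mkSafe, if_pos hH, hm]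
    refine ⟨⟨?_, hbdry, ?_⟩, hlo_le, ?_⟩
    · intro t h1 h2
      rw [hhi, Nat.cast_le] at h2
      by_cases ht : t ≤ t₀
      · exact hfree t h1 ht
      · intro hmemC
        have : t ∈ {u | t₀ < u ∧ (u, v) ∈ C} := ⟨by omega, hmemC⟩
        have := Nat.sInf_le this
        omega
    · intro t ht
      rw [hhi] at ht
      have hm1 : ((m - 1 : ℕ) : ℕ∞) + 1 = ((m - 1 + 1 : ℕ) : ℕ∞) := by
        push_cast; ring
      rw [hm1] at ht
      have : t = m - 1 + 1 := by exact_mod_cast ht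
      have : t = m := by omega
      rw [this]; exact hmm.2
    · rw [hhi, Nat.cast_le]; omega
  · have hhi : (mkSafe C v t₀).hi = ⊤ := by
      simp only [mkSafe, if_neg hH]
    refine ⟨⟨?_, hbdry, ?_⟩, hlo_le, ?_⟩
    · intro t h1 _
      by_cases ht : t ≤ t₀
      · exact hfree t h1 ht
      · intro hmemC
        exact hH ⟨t, by omega, hmemC⟩
    · intro t ht
      rw [hhi] at ht
      simp at ht
    · rw [hhi]; exact le_top

end SafeInt

section Greedy
variable {V : Type*} {G : SimpleGraph V}

def natCons {α : Type*} (a : α) (f : ℕ → α) : ℕ → α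
  | 0 => a
  | (k+1) => f k

@[simp] theorem natCons_zero {α : Type*} (a : α) (f : ℕ → α) : natCons a f 0 = a := rfl
@[simp] theorem natCons_succ {α : Type*} (a : α) (f : ℕ → α) (k : ℕ) :
    natCons a f (k+1) = f k := rfl

noncomputable def greedyT (G : SimpleGraph V) (C : Set (ℕ × V)) (s : V)
    (IN : ℕ → SInterval V) : ℕ → ℕ
  | 0 => 0
  | (k+1) => (earliestReach G C (greedyT G C s IN k)
      (natCons s (fun j => (IN j).v) k) (IN k)).toNat

@[simp] theorem greedyT_zero (G : SimpleGraph V) (C : Set (ℕ × V)) (s : V)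
    (IN : ℕ → SInterval V) : greedyT G C s IN 0 = 0 := rfl

theorem greedyT_succ (G : SimpleGraph V) (C : Set (ℕ × V)) (s : V)
    (IN : ℕ → SInterval V) (k : ℕ) :
    greedyT G C s IN (k+1) = (earliestReach G C (greedyT G C s IN k)
      (natCons s (fun j => (IN j).v) k) (IN k)).toNat := rfl

/-- From a sequence of exact earliest-arrival times one can build an actual
concatenated path realizing the final arrival time. -/
theorem chain_exists (C : Set (ℕ × V)) (s : V) (h0 : (0, s) ∉ C)
    (IN : ℕ → SInterval V) (τN : ℕ → ℕ) (vN : ℕ → V) (n : ℕ)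
    (hτ0 : τN 0 = 0) (hv0 : vN 0 = s)
    (hvs : ∀ k, k < n → vN (k+1) = (IN k).v)
    (hrec : ∀ k, k < n → ((τN (k+1) : ℕ) : ℕ∞) = earliestReach G C (τN k) (vN k) (IN k)) :
    ∀ m, m ≤ n → ∃ P : TPath G, P.start = 0 ∧ P.pos 0 = s ∧ P.Respects C ∧
      P.pos P.len = vN m ∧ P.completion = τN m ∧
      ∀ k, k < m → P.Visits (IN k).v := by
  intro m
  induction m with
  | zero =>
    intro _
    refine ⟨waitPath G 0 s 0, rfl, rfl, ?_, hv0.symm, ?_, ?_⟩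
    · intro i hi
      have hi' : i ≤ 0 := hi
      have : i = 0 := by omega
      subst this
      exact h0
    · simp [TPath.completion, waitPath, hτ0]
    · intro k hk; omega
  | succ m ih =>
    intro hm1
    obtain ⟨P, hPs, hP0, hPr, hPe, hPc, hPv⟩ := ih (by omega)
    have hrm := hrec m (by omega)
    set S := {x : ℕ∞ | ∃ p : TPath G, p.start = τN m ∧ p.pos 0 = vN m ∧ p.Respects C ∧
      p.pos p.len = (IN m).v ∧ (IN m).lo ≤ p.completion ∧
      ((p.completion : ℕ) : ℕ∞) ≤ (IN m).hi ∧ ((p.completion : ℕ) : ℕ∞) = x} with hS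
    have hER : earliestReach G C (τN m) (vN m) (IN m) = sInf S := rfl
    have hne : S.Nonempty := by
      by_contra hempty
      rw [Set.not_nonempty_iff_eq_empty] at hempty
      rw [hER, hempty, sInf_empty] at hrm
      exact (ENat.coe_ne_top _) hrm
    have hmem := csInf_mem hne
    rw [← hER, ← hrm] at hmem
    obtain ⟨p, hps, hp0, hpr, hpe, hplo, hphi, hpc⟩ := hmem
    have hpcn : p.completion = τN (m+1) := by exact_mod_cast hpc
    have hc : p.pos 0 = P.pos P.len := by rw [hp0, hPe]
    have hst : p.start = P.start + P.len := by
      rw [hps, hPs]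
      have : P.completion = P.start + P.len := rfl
      omega
    refine ⟨tconcat P p hc, by rw [tconcat_start, hPs], ?_, ?_, ?_, ?_, ?_⟩
    · rw [tconcat_pos_left P p hc 0 (Nat.zero_le _)]; exact hP0
    · exact tconcat_respects P p hc hst hPr hpr
    · rw [tconcat_end, hpe, hvs m (by omega)]
    · show (tconcat P p hc).start + (tconcat P p hc).len = τN (m+1)
      rw [tconcat_start, tconcat_len]
      have h1 : P.completion = P.start + P.len := rfl
      have h2 : p.completion = p.start + p.len := rfl
      omega
    · intro k hk
      rcases Nat.lt_or_ge k m with h | h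
      · exact tconcat_visits_left P p hc (hPv k h)
      · have : k = m := by omega
        rw [this]
        exact tconcat_visits_right P p hc ⟨p.len, le_refl _, hpe⟩

/-- Key invariant of the greedy earliest-arrival recursion along the safe
intervals induced by a reference path `π`. -/
theorem greedy_key (C : Set (ℕ × V)) (s : V)
    (IN : ℕ → SInterval V) (iN : ℕ → ℕ) (π : TPath G)
    (hstart : π.start = 0) (hpos : π.pos 0 = s) (hresp : π.Respects C) (n : ℕ)
    (hiN0 : iN 0 = 0)
    (hmono : ∀ k, k + 1 ≤ n → iN k ≤ iN (k+1))
    (hlen : ∀ k, k ≤ n → iN k ≤ π.len)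
    (hIv : ∀ k, k < n → (IN k).v = π.pos (iN (k+1)))
    (hsafe : ∀ k, k < n → (IN k).IsSafe C)
    (hin : ∀ k, k < n → (IN k).lo ≤ iN (k+1) ∧ ((iN (k+1) : ℕ) : ℕ∞) ≤ (IN k).hi) :
    ∀ m, m ≤ n →
      greedyT G C s IN m ≤ iN m ∧
      (∀ t, greedyT G C s IN m ≤ t → t ≤ iN m → (t, natCons s (fun j => (IN j).v) m) ∉ C) ∧
      natCons s (fun j => (IN j).v) m = π.pos (iN m) ∧
      (∀ k, k < m → ((greedyT G C s IN (k+1) : ℕ) : ℕ∞) =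
        earliestReach G C (greedyT G C s IN k) (natCons s (fun j => (IN j).v) k) (IN k)) := by
  intro m
  induction m with
  | zero =>
    intro _
    refine ⟨by rw [hiN0]; simp, ?_, by rw [hiN0, hpos]; rfl, by omega⟩
    intro t h1 h2
    rw [hiN0] at h2
    have : t = 0 := by omega
    rw [this]
    simpa [hstart, hpos] using hresp 0 (Nat.zero_le _)
  | succ m ih =>
    intro hm1
    obtain ⟨hle, hfree, hveq, hcast⟩ := ih (by omega)
    set τm := greedyT G C s IN m with hτm
    set vm := natCons s (fun j => (IN j).v) m with hvm
    have hsub_le : iN (m+1) ≤ π.len := hlen (m+1) hm1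
    have hmono' : iN m ≤ iN (m+1) := hmono m hm1
    set w : TPath G := waitPath G τm vm (iN m - τm) with hw
    set q : TPath G := subPath π (iN m) (iN (m+1)) hsub_le with hq
    have hc : q.pos 0 = w.pos w.len := by
      show π.pos (iN m + 0) = vm
      rw [Nat.add_zero, hveq]
    set r : TPath G := tconcat w q hc with hr
    have hrstart : r.start = τm := rfl
    have hrpos0 : r.pos 0 = vm := by
      rw [hr, tconcat_pos_left w q hc 0 (Nat.zero_le _)]
      rfl
    have hrcomp : r.completion = iN (m+1) := by
      show r.start + r.len = iN (m+1)
      rw [hr, tconcat_start, tconcat_len]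
      show τm + ((iN m - τm) + (iN (m+1) - iN m)) = iN (m+1)
      omega
    have hwresp : w.Respects C := by
      intro i hi
      have hi' : i ≤ iN m - τm := hi
      exact hfree (τm + i) (by omega) (by omega)
    have hqresp : q.Respects C := by
      intro i hi
      have hi' : i ≤ iN (m+1) - iN m := hi
      have h3 : π.start + iN m + i = π.start + (iN m + i) := by omega
      show (π.start + iN m + i, π.pos (iN m + i)) ∉ C
      rw [h3]
      exact hresp (iN m + i) (by omega)
    have hrresp : r.Respects C := tconcat_respects w q hc
      (by show π.start + iN m = τm + (iN m - τm); rw [hstart]; omega) hwresp hqresp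
    have hrend : r.pos r.len = (IN m).v := by
      rw [hr, tconcat_end]
      show π.pos (iN m + (iN (m+1) - iN m)) = (IN m).v
      rw [hIv m (by omega)]
      congr 1
      omega
    -- so iN (m+1) is a feasible arrival time
    set S := {x : ℕ∞ | ∃ p : TPath G, p.start = τm ∧ p.pos 0 = vm ∧ p.Respects C ∧
      p.pos p.len = (IN m).v ∧ (IN m).lo ≤ p.completion ∧
      ((p.completion : ℕ) : ℕ∞) ≤ (IN m).hi ∧ ((p.completion : ℕ) : ℕ∞) = x} with hS
    have hER : earliestReach G C τm vm (IN m) = sInf S := rfl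
    have hmemS : ((iN (m+1) : ℕ) : ℕ∞) ∈ S :=
      ⟨r, hrstart, hrpos0, hrresp, hrend, by rw [hrcomp]; exact (hin m (by omega)).1,
        by rw [hrcomp]; exact (hin m (by omega)).2, by rw [hrcomp]⟩
    have hinf_le : sInf S ≤ ((iN (m+1) : ℕ) : ℕ∞) := sInf_le hmemS
    have hmem := csInf_mem ⟨_, hmemS⟩
    obtain ⟨p, hps, hp0, hpr, hpe, hplo, hphi, hpc⟩ := hmem
    have hfin : sInf S ≠ ⊤ := by
      rw [← hpc]; exact ENat.coe_ne_top _
    have hgT : greedyT G C s IN (m+1) = p.completion := by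
      rw [greedyT_succ, ← hvm, ← hτm, hER, ← hpc, ENat.toNat_coe]
    have hgTcast : ((greedyT G C s IN (m+1) : ℕ) : ℕ∞) = sInf S := by
      rw [hgT, hpc]
    have hgle : greedyT G C s IN (m+1) ≤ iN (m+1) := by
      have := le_trans (le_of_eq hgTcast) hinf_le
      exact_mod_cast this
    have hglo : (IN m).lo ≤ greedyT G C s IN (m+1) := by rw [hgT]; exact hplo
    refine ⟨hgle, ?_, ?_, ?_⟩
    · intro t h1 h2
      rw [natCons_succ]
      have hs1 := (hsafe m (by omega)).1
      refine hs1 t (le_trans hglo h1) ?_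
      calc (t : ℕ∞) ≤ ((iN (m+1) : ℕ) : ℕ∞) := by exact_mod_cast h2
        _ ≤ (IN m).hi := (hin m (by omega)).2
    · rw [natCons_succ, hIv m (by omega)]
    · intro k hk
      rcases Nat.lt_or_ge k m with h | h
      · exact hcast k h
      · have : k = m := by omega
        rw [this, hgTcast, hER]

end Greedy

/-- Exchange argument for optimal goal-safe-interval sequences: any optimal
constraint-respecting path `π` from `(0, s)` visiting all goals of `Γ` induces
a sequence of goal safe intervals, visited in order by `π` and covering `Γ`,
such that the greedy (earliest-arrival) concatenation along this sequence has
completion time equal to that of `π`; hence the minimum over all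
goal-safe-interval visiting sequences of the greedy completion time equals the
true optimum. -/
theorem statement14 {V : Type*} (G : SimpleGraph V) (C : Set (ℕ × V)) (s : V)
    (Γ : Finset V) (π : TPath G)
    (hstart : π.start = 0) (hpos : π.pos 0 = s) (hresp : π.Respects C)
    (hvisit : ∀ g ∈ Γ, π.Visits g)
    (hopt : (π.completion : ℕ∞) = minCompletion G C 0 s ↑Γ) :
    (∃ (n : ℕ) (I : Fin n → SInterval V),
      (∀ k, (I k).IsSafe C ∧ (I k).v ∈ Γ) ∧
      (∀ g ∈ Γ, ∃ k, (I k).v = g) ∧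
      VisitsInOrder π I ∧
      ∃ (τ : Fin (n + 1) → ℕ) (vtx : Fin (n + 1) → V),
        τ 0 = 0 ∧ vtx 0 = s ∧ (∀ k : Fin n, vtx k.succ = (I k).v) ∧
        (∀ k : Fin n, (τ k.succ : ℕ∞) =
          earliestReach G C (τ k.castSucc) (vtx k.castSucc) (I k)) ∧
        (τ (Fin.last n) : ℕ∞) = (π.completion : ℕ∞)) ∧
    sInf {m : ℕ∞ | ∃ (n : ℕ) (I : Fin n → SInterval V)
        (τ : Fin (n + 1) → ℕ) (vtx : Fin (n + 1) → V),
        (∀ k, (I k).IsSafe C ∧ (I k).v ∈ Γ) ∧ (∀ g ∈ Γ, ∃ k, (I k).v = g) ∧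
        τ 0 = 0 ∧ vtx 0 = s ∧ (∀ k : Fin n, vtx k.succ = (I k).v) ∧
        (∀ k : Fin n, (τ k.succ : ℕ∞) =
          earliestReach G C (τ k.castSucc) (vtx k.castSucc) (I k)) ∧
        (τ (Fin.last n) : ℕ∞) = m} = minCompletion G C 0 s ↑Γ := by
  classical
  have h0s : (0, s) ∉ C := by
    have := hresp 0 (Nat.zero_le _)
    simpa [hstart, hpos] using this
  -- canonical visiting times for each goal
  set f : V → ℕ := fun g => sInf {i | i ≤ π.len ∧ π.pos i = g} with hf_def
  have hf : ∀ g ∈ Γ, f g ≤ π.len ∧ π.pos (f g) = g := by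
    intro g hg
    obtain ⟨i, h1, h2⟩ := hvisit g hg
    have hne : {i | i ≤ π.len ∧ π.pos i = g}.Nonempty := ⟨i, h1, h2⟩
    exact Nat.sInf_mem hne
  set n := Γ.card with hn
  set T : Finset ℕ := Γ.image f with hT
  have hinj : Set.InjOn f Γ := by
    intro a ha b hb hab
    rw [← (hf a ha).2, ← (hf b hb).2, hab]
  have hcard : T.card = n := Finset.card_image_of_injOn hinj
  set e := T.orderIsoOfFin hcard with he
  set idx : Fin n → ℕ := fun k => (e k : ℕ) with hidx_def
  have hidx_mono : Monotone idx := fun a b hab => Subtype.coe_le_coe.mpr (e.monotone hab)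
  have hidx_mem : ∀ k, idx k ∈ T := fun k => (e k).2
  have hgoal : ∀ k : Fin n, idx k ≤ π.len ∧ π.pos (idx k) ∈ Γ := by
    intro k
    obtain ⟨g, hg, hfg⟩ := Finset.mem_image.mp (hidx_mem k)
    rw [← hfg]
    exact ⟨(hf g hg).1, by rw [(hf g hg).2]; exact hg⟩
  have hnotC : ∀ k : Fin n, (idx k, π.pos (idx k)) ∉ C := by
    intro k
    have := hresp (idx k) (hgoal k).1
    rwa [hstart, Nat.zero_add] at this
  set I : Fin n → SInterval V := fun k => mkSafe C (π.pos (idx k)) (idx k) with hI_def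
  have hspec : ∀ k : Fin n, (I k).IsSafe C ∧ (I k).lo ≤ idx k ∧ ((idx k : ℕ) : ℕ∞) ≤ (I k).hi :=
    fun k => mkSafe_spec C (π.pos (idx k)) (idx k) (hnotC k)
  have hIv : ∀ k : Fin n, (I k).v = π.pos (idx k) := fun k => rfl
  have hIΓ : ∀ k : Fin n, (I k).IsSafe C ∧ (I k).v ∈ Γ := fun k => ⟨(hspec k).1, (hgoal k).2⟩
  have hcover : ∀ g ∈ Γ, ∃ k : Fin n, (I k).v = g := by
    intro g hg
    have hmemT : f g ∈ T := Finset.mem_image_of_mem f hg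
    refine ⟨e.symm ⟨f g, hmemT⟩, ?_⟩
    have h1 : idx (e.symm ⟨f g, hmemT⟩) = f g := by
      rw [hidx_def]
      simp
    rw [hIv, h1, (hf g hg).2]
  -- ℕ-indexed versions
  set IN : ℕ → SInterval V := fun j => if h : j < n then I ⟨j, h⟩ else ⟨s, 0, 0⟩ with hIN_def
  set iN : ℕ → ℕ := natCons 0 (fun k => if h : k < n then idx ⟨k, h⟩ else 0) with hiN_def
  have hINk : ∀ (k : ℕ) (h : k < n), IN k = I ⟨k, h⟩ := by
    intro k h; rw [hIN_def]; simp [h]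
  have hiNk : ∀ (k : ℕ) (h : k < n), iN (k + 1) = idx ⟨k, h⟩ := by
    intro k h; rw [hiN_def]; simp [h]
  have hiN0 : iN 0 = 0 := rfl
  have hINfin : ∀ k : Fin n, IN (k : ℕ) = I k := by
    intro k
    rw [hINk k k.isLt]
  have hmono : ∀ k, k + 1 ≤ n → iN k ≤ iN (k + 1) := by
    intro k hk
    cases k with
    | zero => rw [hiN0]; exact Nat.zero_le _
    | succ j =>
      rw [hiNk j (by omega), hiNk (j + 1) (by omega)]
      exact hidx_mono (by rw [Fin.mk_le_mk]; omega)
  have hlen : ∀ k, k ≤ n → iN k ≤ π.len := by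
    intro k hk
    cases k with
    | zero => rw [hiN0]; exact Nat.zero_le _
    | succ j => rw [hiNk j (by omega)]; exact (hgoal _).1
  have hIvN : ∀ k, k < n → (IN k).v = π.pos (iN (k + 1)) := by
    intro k h
    rw [hINk k h, hiNk k h]
    exact hIv _
  have hsafeN : ∀ k, k < n → (IN k).IsSafe C := by
    intro k h; rw [hINk k h]; exact (hspec _).1
  have hinN : ∀ k, k < n → (IN k).lo ≤ iN (k + 1) ∧ ((iN (k + 1) : ℕ) : ℕ∞) ≤ (IN k).hi := by
    intro k h
    rw [hINk k h, hiNk k h]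
    exact ⟨(hspec _).2.1, (hspec _).2.2⟩
  -- greedy invariant
  have key := greedy_key C s IN iN π hstart hpos hresp n hiN0 hmono hlen hIvN hsafeN hinN
    n le_rfl
  obtain ⟨hτle, -, -, hrecN⟩ := key
  -- concatenated greedy path
  obtain ⟨P, hPs, hP0, hPr, -, hPc, hPv⟩ := chain_exists C s h0s IN
    (greedyT G C s IN) (natCons s (fun j => (IN j).v)) n rfl rfl (fun k hk => rfl)
    hrecN n le_rfl
  have hPvisΓ : ∀ g ∈ (↑Γ : Set V), P.Visits g := by
    intro g hg
    obtain ⟨k, hk⟩ := hcover g (Finset.mem_coe.mp hg)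
    have := hPv (k : ℕ) k.isLt
    rwa [hINfin k, hk] at this
  have hmc : minCompletion G C 0 s ↑Γ ≤ ((greedyT G C s IN n : ℕ) : ℕ∞) := by
    apply sInf_le
    exact ⟨P, hPs, hP0, hPr, hPvisΓ, by rw [hPc]⟩
  have hge : π.completion ≤ greedyT G C s IN n := by
    have := hopt.le.trans hmc
    exact_mod_cast this
  have hfinal : greedyT G C s IN n = π.completion := by
    have h1 : π.completion = π.start + π.len := rfl
    have h2 := hlen n le_rfl
    omega
  -- the data
  set τ : Fin (n + 1) → ℕ := fun k => greedyT G C s IN (k : ℕ) with hτ_def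
  set vtx : Fin (n + 1) → V := fun k => natCons s (fun j => (IN j).v) (k : ℕ) with hvtx_def
  have hτ0 : τ 0 = 0 := by rw [hτ_def]; simp
  have hv0 : vtx 0 = s := by rw [hvtx_def]; simp
  have hvs : ∀ k : Fin n, vtx k.succ = (I k).v := by
    intro k
    rw [hvtx_def]
    simp only [Fin.val_succ, natCons_succ]
    rw [hINfin k]
  have hrecτ : ∀ k : Fin n, (τ k.succ : ℕ∞) =
      earliestReach G C (τ k.castSucc) (vtx k.castSucc) (I k) := by
    intro k
    rw [hτ_def, hvtx_def]
    simp only [Fin.val_succ, Fin.coe_castSucc]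
    rw [← hINfin k]
    exact hrecN (k : ℕ) k.isLt
  have hτlast : (τ (Fin.last n) : ℕ∞) = (π.completion : ℕ∞) := by
    rw [hτ_def]
    simp only [Fin.val_last]
    rw [hfinal]
  have hVIO : VisitsInOrder π I := by
    refine ⟨idx, hidx_mono, fun k => ⟨(hgoal k).1, (hIv k).symm, ?_, ?_⟩⟩
    · rw [hstart, Nat.zero_add]; exact (hspec k).2.1
    · rw [hstart, Nat.zero_add]; exact (hspec k).2.2
  refine ⟨⟨n, I, hIΓ, hcover, hVIO, τ, vtx, hτ0, hv0, hvs, hrecτ, hτlast⟩, ?_⟩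
  -- the sInf equality
  apply le_antisymm
  · rw [← hopt]
    exact sInf_le ⟨n, I, τ, vtx, hIΓ, hcover, hτ0, hv0, hvs, hrecτ, hτlast⟩
  · apply le_sInf
    rintro m ⟨n', I', τ', vtx', hsafe', hcover', hτ0', hv0', hvs', hrec', hτl'⟩
    -- build the concatenated path for this data
    set IN' : ℕ → SInterval V := fun j => if h : j < n' then I' ⟨j, h⟩ else ⟨s, 0, 0⟩
      with hIN'_def
    set τN' : ℕ → ℕ := fun j => if h : j < n' + 1 then τ' ⟨j, h⟩ else 0 with hτN'_def
    set vN' : ℕ → V := fun j => if h : j < n' + 1 then vtx' ⟨j, h⟩ else s with hvN'_def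
    have hτN'k : ∀ (j : ℕ) (h : j < n' + 1), τN' j = τ' ⟨j, h⟩ := by
      intro j h; rw [hτN'_def]; simp [h]
    have hvN'k : ∀ (j : ℕ) (h : j < n' + 1), vN' j = vtx' ⟨j, h⟩ := by
      intro j h; rw [hvN'_def]; simp [h]
    have hIN'k : ∀ (j : ℕ) (h : j < n'), IN' j = I' ⟨j, h⟩ := by
      intro j h; rw [hIN'_def]; simp [h]
    have hchain := chain_exists C s h0s IN' τN' vN' n'
      (by rw [hτN'k 0 (by omega)]; rw [show (⟨0, by omega⟩ : Fin (n' + 1)) = 0 from rfl]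
          exact hτ0')
      (by rw [hvN'k 0 (by omega)]; rw [show (⟨0, by omega⟩ : Fin (n' + 1)) = 0 from rfl]
          exact hv0')
      (by intro k hk
          rw [hvN'k (k + 1) (by omega), hIN'k k hk]
          have := hvs' ⟨k, hk⟩
          rwa [Fin.succ_mk] at this)
      (by intro k hk
          rw [hτN'k (k + 1) (by omega), hτN'k k (by omega), hvN'k k (by omega), hIN'k k hk]
          have := hrec' ⟨k, hk⟩
          rwa [Fin.succ_mk, Fin.castSucc_mk] at this)
      n' le_rfl
    obtain ⟨P', hP's, hP'0, hP'r, -, hP'c, hP'v⟩ := hchain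
    have hP'visΓ : ∀ g ∈ (↑Γ : Set V), P'.Visits g := by
      intro g hg
      obtain ⟨k, hk⟩ := hcover' g (Finset.mem_coe.mp hg)
      have := hP'v (k : ℕ) k.isLt
      rwa [hIN'k (k : ℕ) k.isLt, Fin.eta, hk] at this
    have hcompm : ((P'.completion : ℕ) : ℕ∞) = m := by
      rw [hP'c, hτN'k n' (by omega)]
      rw [show (⟨n', by omega⟩ : Fin (n' + 1)) = Fin.last n' from rfl]
      exact hτl'
    apply sInf_le
    exact ⟨P', hP's, hP'0, hP'r, hP'visΓ, hcompm⟩
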